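/- arXiv:1211.5476 — 2 statements merged into one kernel-verified Lean document; each statement's English description precedes it below -/
import Mathlib

section
/- For φ(x) = C e^{-λ|x|} with C ∈ ℂ, λ > 0, equality holds in the interpolation inequality: ∫_{ℝ³} |φ|² dx = (2/3)(∫_{ℝ³} |x||φ|² dx)^{1/2}(∫_{ℝ³} |x||∂_r φ|² dx)^{1/2}. -/
noncomputable section
open MeasureTheory Matrix Finset

abbrev E3 := EuclideanSpace ℝ (Fin 3)

/-- The Pauli matrices. -/
def pauli : Fin 3 → Matrix (Fin 2) (Fin 2) ℂ :=
  ![!![0, 1; 1, 0], !![0, -Complex.I; Complex.I, 0], !![1, 0; 0, -1]]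

/-- `σ · a` for a real vector `a`. -/
def sigmaDot (a : Fin 3 → ℝ) : Matrix (Fin 2) (Fin 2) ℂ :=
  ∑ k, (a k : ℂ) • pauli k

/-- `(σ · ∇)φ` for a `ℂ²`-valued function. -/
def sigmaGrad (φ : E3 → Fin 2 → ℂ) (x : E3) : Fin 2 → ℂ :=
  ∑ k, (pauli k).mulVec (fderiv ℝ φ x (EuclideanSpace.single k 1))

/-- The radial derivative `∂_r φ(x) = (x/|x|)·∇φ(x)`. -/
def radialDeriv {F : Type*} [NormedAddCommGroup F] [NormedSpace ℝ F]
    (φ : E3 → F) (x : E3) : F := fderiv ℝ φ x (‖x‖⁻¹ • x)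

/-- The Dirac matrices `α_k` in block form. -/
def diracAlpha (k : Fin 3) : Matrix (Fin 4) (Fin 4) ℂ :=
  Matrix.reindex finSumFinEquiv finSumFinEquiv ((Matrix.fromBlocks 0 (pauli k) (pauli k) 0 : Matrix (Fin 2 ⊕ Fin 2) (Fin 2 ⊕ Fin 2) ℂ))

/-- The Dirac matrix `β` in block form. -/
def diracBeta : Matrix (Fin 4) (Fin 4) ℂ :=
  Matrix.reindex finSumFinEquiv finSumFinEquiv ((Matrix.fromBlocks 1 0 0 (-1) : Matrix (Fin 2 ⊕ Fin 2) (Fin 2 ⊕ Fin 2) ℂ))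

/-- `(α · ∇)ψ` for a `ℂ⁴`-valued function. -/
def alphaGrad (ψ : E3 → Fin 4 → ℂ) (x : E3) : Fin 4 → ℂ :=
  ∑ k, (diracAlpha k).mulVec (fderiv ℝ ψ x (EuclideanSpace.single k 1))

lemma gammaInt (lam : ℝ) (hlam : 0 < lam) (n : ℕ) :
    ∫ y in Set.Ioi (0:ℝ), y ^ n * Real.exp (-(2*lam*y)) = (1/(2*lam))^(n+1) * (Nat.factorial n) := by
  have h := Real.integral_rpow_mul_exp_neg_mul_Ioi (a := n+1)
    (by positivity) (r := 2*lam) (by positivity)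
  rw [Real.Gamma_nat_eq_factorial] at h
  rw [show ((n:ℝ)+1) = ((n+1:ℕ):ℝ) by push_cast; ring, Real.rpow_natCast] at h
  rw [← h]
  apply setIntegral_congr_fun measurableSet_Ioi
  intro t ht
  simp only []
  rw [show ((n+1:ℕ):ℝ) - 1 = ((n:ℕ):ℝ) by push_cast; ring, Real.rpow_natCast]

lemma radialKey (f : ℝ → ℝ) : ∫ x : E3, f ‖x‖ =
    3 * (volume (Metric.ball (0:E3) 1)).toReal * ∫ y in Set.Ioi (0:ℝ), y ^ 2 * f y := by
  rw [MeasureTheory.integral_fun_norm_addHaar volume f]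
  have h3 : Module.finrank ℝ E3 = 3 := finrank_euclideanSpace_fin
  rw [h3]
  simp [smul_eq_mul, mul_assoc, ← integral_const_mul, Measure.real]

theorem stmt5 (C : ℂ) (lam : ℝ) (hlam : 0 < lam) (φ : E3 → ℂ)
    (hφ : ∀ x, φ x = C * (Real.exp (-lam * ‖x‖) : ℝ)) :
    (∫ x : E3, ‖φ x‖ ^ 2) =
      2 / 3 * Real.sqrt (∫ x : E3, ‖x‖ * ‖φ x‖ ^ 2) *
        Real.sqrt (∫ x : E3, ‖x‖ * ‖radialDeriv φ x‖ ^ 2) := by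
  set c := ‖C‖ with hcdef
  have hc0 : 0 ≤ c := norm_nonneg C
  -- pointwise formula for the radial derivative
  have hrd : ∀ x : E3, x ≠ 0 → ‖radialDeriv φ x‖ = c * (lam * Real.exp (-lam * ‖x‖)) := by
    intro x hx
    have hnorm : DifferentiableAt ℝ (fun y : E3 => ‖y‖) x :=
      ((contDiffAt_norm (𝕜 := ℝ) (n := 1) hx).differentiableAt one_ne_zero)
    set N := fderiv ℝ (fun y : E3 => ‖y‖) x with hNdef
    have hN : HasFDerivAt (fun y : E3 => ‖y‖) N x := hnorm.hasFDerivAt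
    have hexp : HasDerivAt (fun t : ℝ => Real.exp (-lam * t))
        (Real.exp (-lam * ‖x‖) * (-lam)) ‖x‖ := by
      simpa [Function.comp_def] using (Real.hasDerivAt_exp (-lam * ‖x‖)).comp ‖x‖
        ((hasDerivAt_id ‖x‖).const_mul (-lam))
    have hcomp : HasFDerivAt (fun y : E3 => Real.exp (-lam * ‖y‖))
        ((Real.exp (-lam * ‖x‖) * (-lam)) • N) x := hexp.comp_hasFDerivAt x hN
    set L : ℝ →L[ℝ] ℂ := C • Complex.ofRealCLM with hL
    have hϕ : HasFDerivAt φ (L.comp ((Real.exp (-lam * ‖x‖) * (-lam)) • N)) x := by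
      have h := L.hasFDerivAt.comp x hcomp
      have hf : φ = ⇑L ∘ fun y : E3 => Real.exp (-lam * ‖y‖) := by
        funext y
        simp [hφ y, hL, Complex.real_smul]
      rw [hf]
      exact h
    have hNx : N x = ‖x‖ := hnorm.fderiv_norm_self
    have hxn : ‖x‖ ≠ 0 := norm_ne_zero_iff.2 hx
    have hval : radialDeriv φ x = C * (Real.exp (-lam * ‖x‖) * (-lam)) := by
      rw [radialDeriv, hϕ.fderiv]
      simp only [ContinuousLinearMap.comp_apply, ContinuousLinearMap.coe_smul',
        Pi.smul_apply, _root_.map_smul, smul_eq_mul, hNx]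
      have hxc : ((‖x‖:ℝ):ℂ) ≠ 0 := by exact_mod_cast hxn
      simp [hL, Complex.real_smul, Complex.ofReal_mul, smul_eq_mul]
      field_simp
    rw [hval, norm_mul, norm_mul, norm_neg, Complex.norm_real, Complex.norm_real,
      Real.norm_eq_abs, Real.norm_eq_abs, Real.abs_exp, abs_of_pos hlam]
    ring
  have hφn : ∀ x : E3, ‖φ x‖ = c * Real.exp (-lam * ‖x‖) := by
    intro x
    rw [hφ x, norm_mul, Complex.norm_real, Real.norm_eq_abs, Real.abs_exp]
  set K := (volume (Metric.ball (0:E3) 1)).toReal with hKdef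
  have hK0 : 0 ≤ K := ENNReal.toReal_nonneg
  -- the three integrals
  have e0 : (∫ x : E3, ‖φ x‖ ^ 2)
      = 3 * K * ∫ y in Set.Ioi (0:ℝ), y ^ 2 * (c ^ 2 * Real.exp (-(2*lam*y))) := by
    rw [← radialKey (fun r => c ^ 2 * Real.exp (-(2*lam*r)))]
    apply integral_congr_ae
    filter_upwards with x
    rw [hφn x, mul_pow, sq (Real.exp _), ← Real.exp_add]
    congr 2
    ring
  have e1 : (∫ x : E3, ‖x‖ * ‖φ x‖ ^ 2)
      = 3 * K * ∫ y in Set.Ioi (0:ℝ), y ^ 2 * (y * (c ^ 2 * Real.exp (-(2*lam*y)))) := by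
    rw [← radialKey (fun r => r * (c ^ 2 * Real.exp (-(2*lam*r))))]
    apply integral_congr_ae
    filter_upwards with x
    rw [hφn x, mul_pow, sq (Real.exp _), ← Real.exp_add]
    congr 3
    ring
  have e2 : (∫ x : E3, ‖x‖ * ‖radialDeriv φ x‖ ^ 2)
      = 3 * K * ∫ y in Set.Ioi (0:ℝ),
          y ^ 2 * (y * (lam ^ 2 * c ^ 2 * Real.exp (-(2*lam*y)))) := by
    rw [← radialKey (fun r => r * (lam ^ 2 * c ^ 2 * Real.exp (-(2*lam*r))))]
    apply integral_congr_ae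
    have h0 : (volume : Measure E3) {0} = 0 := measure_singleton 0
    filter_upwards [compl_mem_ae_iff.mpr h0] with x hx
    have hx0 : x ≠ 0 := hx
    rw [hrd x hx0, mul_pow, mul_pow, sq (Real.exp _), ← Real.exp_add]
    have : Real.exp (-lam * ‖x‖ + -lam * ‖x‖) = Real.exp (-(2*lam*‖x‖)) := by
      congr 1; ring
    rw [this]
    ring
  have g2 := gammaInt lam hlam 2
  have g3 := gammaInt lam hlam 3
  have i0 : (∫ y in Set.Ioi (0:ℝ), y ^ 2 * (c ^ 2 * Real.exp (-(2*lam*y))))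
      = c ^ 2 * ((1/(2*lam))^3 * 2) := by
    have : ∀ y : ℝ, y ^ 2 * (c ^ 2 * Real.exp (-(2*lam*y)))
        = c ^ 2 * (y ^ 2 * Real.exp (-(2*lam*y))) := fun y => by ring
    simp_rw [this, integral_const_mul, g2]
    norm_num [Nat.factorial]
  have i1 : (∫ y in Set.Ioi (0:ℝ), y ^ 2 * (y * (c ^ 2 * Real.exp (-(2*lam*y)))))
      = c ^ 2 * ((1/(2*lam))^4 * 6) := by
    have : ∀ y : ℝ, y ^ 2 * (y * (c ^ 2 * Real.exp (-(2*lam*y))))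
        = c ^ 2 * (y ^ 3 * Real.exp (-(2*lam*y))) := fun y => by ring
    simp_rw [this, integral_const_mul, g3]
    norm_num [Nat.factorial]
  have i2 : (∫ y in Set.Ioi (0:ℝ), y ^ 2 * (y * (lam ^ 2 * c ^ 2 * Real.exp (-(2*lam*y)))))
      = lam ^ 2 * (c ^ 2 * ((1/(2*lam))^4 * 6)) := by
    have : ∀ y : ℝ, y ^ 2 * (y * (lam ^ 2 * c ^ 2 * Real.exp (-(2*lam*y))))
        = (lam ^ 2 * c ^ 2) * (y ^ 3 * Real.exp (-(2*lam*y))) := fun y => by ring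
    simp_rw [this, integral_const_mul, g3]
    norm_num [Nat.factorial]
    ring
  rw [e0, e1, e2, i0, i1, i2]
  set A := 3 * K * (c ^ 2 * ((1/(2*lam))^4 * 6)) with hA
  have hA0 : 0 ≤ A := by positivity
  have harg : 3 * K * (lam ^ 2 * (c ^ 2 * ((1/(2*lam))^4 * 6))) = lam ^ 2 * A := by
    rw [hA]; ring
  rw [harg, Real.sqrt_mul (sq_nonneg lam), Real.sqrt_sq hlam.le]
  have : 2 / 3 * Real.sqrt A * (lam * Real.sqrt A)
      = 2 / 3 * lam * (Real.sqrt A * Real.sqrt A) := by ring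
  rw [this, Real.mul_self_sqrt hA0, hA]
  field_simp
  ring
end
end

section
/- Let m ≥ 0 and define ψ₀ = (φ₀, χ₀) where φ₀(x) = C |x|^{-1} e^{-m|x|} with C ∈ ℂ² constant and χ₀ = i (σ·x/|x|) φ₀. Then ψ₀ satisfies (-i α·∇ + mβ - (1/|x|) I₄)ψ₀ = 0 on ℝ³∖{0}, i.e., ψ₀ is a zero-energy eigenfunction of the Dirac–Coulomb operator with coupling ν = 1. -/
noncomputable section
open MeasureTheory Matrix Finset

/- auxiliary lemmas -/

theorem aux_hasFDerivAt_norm (x : E3) (hx : x ≠ 0) :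
    HasFDerivAt (fun y : E3 => ‖y‖) (‖x‖⁻¹ • innerSL ℝ x) x := by
  have hr : (0:ℝ) < ‖x‖ := norm_pos_iff.2 hx
  have hsq : HasFDerivAt (fun y : E3 => ‖y‖^2) ((2:ℝ) • innerSL ℝ x) x := by
    have := (hasStrictFDerivAt_norm_sq x).hasFDerivAt
    refine this.congr_fderiv ?_
    ext y; simp [two_smul]
  have h := hsq.sqrt (by positivity)
  have h2 : (fun y : E3 => Real.sqrt (‖y‖^2)) = fun y : E3 => ‖y‖ := by
    funext y; rw [Real.sqrt_sq (norm_nonneg y)]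
  rw [h2] at h
  refine h.congr_fderiv ?_
  rw [Real.sqrt_sq (norm_nonneg x), smul_smul]
  congr 1
  field_simp

theorem aux_radial (x : E3) (hx : x ≠ 0) (f : ℝ → ℝ) (f' : ℝ)
    (hf : HasDerivAt f f' ‖x‖) (C : Fin 2 → ℂ) :
    HasFDerivAt (fun y : E3 => ((f ‖y‖ : ℝ) : ℂ) • C)
      ((Complex.ofRealCLM.comp (f' • (‖x‖⁻¹ • innerSL ℝ x))).smulRight C) x := by
  have h1 : HasFDerivAt (fun y : E3 => f ‖y‖) (f' • (‖x‖⁻¹ • innerSL ℝ x)) x :=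
    hf.comp_hasFDerivAt x (aux_hasFDerivAt_norm x hx)
  exact (Complex.ofRealCLM.hasFDerivAt.comp x h1).smul_const C

theorem aux_coordRadial (x : E3) (hx : x ≠ 0) (f : ℝ → ℝ) (f' : ℝ)
    (hf : HasDerivAt f f' ‖x‖) (k : Fin 3) (v : Fin 2 → ℂ) :
    HasFDerivAt (fun y : E3 => ((y k * f ‖y‖ : ℝ) : ℂ) • v)
      ((Complex.ofRealCLM.comp
        ((x k) • (f' • (‖x‖⁻¹ • innerSL ℝ x)) + f ‖x‖ • (EuclideanSpace.proj k : E3 →L[ℝ] ℝ))).smulRight v) x := by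
  have hc : HasFDerivAt (fun y : E3 => y k) (EuclideanSpace.proj k : E3 →L[ℝ] ℝ) x :=
    (EuclideanSpace.proj (𝕜 := ℝ) k).hasFDerivAt
  have hd : HasFDerivAt (fun y : E3 => f ‖y‖) (f' • (‖x‖⁻¹ • innerSL ℝ x)) x :=
    hf.comp_hasFDerivAt x (aux_hasFDerivAt_norm x hx)
  have h1 := hc.mul hd
  exact (Complex.ofRealCLM.hasFDerivAt.comp x h1).smul_const v

theorem aux_eval1 (x : E3) (f' : ℝ) (C : Fin 2 → ℂ) (l : Fin 3) :
    ((Complex.ofRealCLM.comp (f' • (‖x‖⁻¹ • innerSL ℝ x))).smulRight C)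
      (EuclideanSpace.single l 1) = ((f' * (‖x‖⁻¹ * x l) : ℝ) : ℂ) • C := by
  simp [real_inner_comm, EuclideanSpace.inner_single_left, EuclideanSpace.inner_single_right, mul_assoc]

theorem aux_eval2 (x : E3) (a b f' : ℝ) (v : Fin 2 → ℂ) (k l : Fin 3) :
    ((Complex.ofRealCLM.comp
        (a • (f' • (‖x‖⁻¹ • innerSL ℝ x)) + b • (EuclideanSpace.proj k : E3 →L[ℝ] ℝ))).smulRight v)
      (EuclideanSpace.single l 1)
      = ((a * (f' * (‖x‖⁻¹ * x l)) + b * (if k = l then 1 else 0) : ℝ) : ℂ) • v := by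
  by_cases h : k = l <;>
    simp [h, real_inner_comm x, EuclideanSpace.inner_single_left, EuclideanSpace.inner_single_right, EuclideanSpace.single_apply,
      mul_assoc]

theorem stmt16 (m : ℝ) (hm : 0 ≤ m) (C : Fin 2 → ℂ) (φ₀ χ₀ : E3 → Fin 2 → ℂ)
    (hφ₀ : ∀ x : E3, φ₀ x = ((‖x‖⁻¹ * Real.exp (-m * ‖x‖) : ℝ) : ℂ) • C)
    (hχ₀ : ∀ x : E3, χ₀ x = Complex.I • (sigmaDot (fun k => x k / ‖x‖)).mulVec (φ₀ x)) :
    ∀ x : E3, x ≠ 0 →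
      ((-Complex.I) • sigmaGrad χ₀ x + (m : ℂ) • φ₀ x -
        ((‖x‖⁻¹ : ℝ) : ℂ) • φ₀ x = 0) ∧
      ((-Complex.I) • sigmaGrad φ₀ x - (m : ℂ) • χ₀ x -
        ((‖x‖⁻¹ : ℝ) : ℂ) • χ₀ x = 0) := by
  have hφ : φ₀ = fun y : E3 => (((fun t : ℝ => t⁻¹ * Real.exp (-m * t)) ‖y‖ : ℝ) : ℂ) • C :=
    funext hφ₀
  subst hφ
  have hχ : χ₀ = fun y : E3 =>
      ∑ k, ((y k * (fun t : ℝ => t⁻¹ * t⁻¹ * Real.exp (-m * t)) ‖y‖ : ℝ) : ℂ) •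
        (Complex.I • (pauli k).mulVec C) := by
    funext y
    rw [hχ₀]
    funext j
    simp only [sigmaDot, Matrix.mulVec, dotProduct, Finset.sum_apply, Matrix.sum_apply,
      Matrix.smul_apply, Pi.smul_apply, smul_eq_mul, Fin.sum_univ_three, Fin.sum_univ_two,
      div_eq_mul_inv, Complex.ofReal_mul, Complex.ofReal_inv]
    fin_cases j <;> · simp only [pauli]; norm_num [Matrix.cons_val_zero, Matrix.cons_val_one]; ring
  subst hχ
  intro x hx
  have hr : (0:ℝ) < ‖x‖ := norm_pos_iff.2 hx
  have hexp : HasDerivAt (fun t : ℝ => Real.exp (-m * t)) (Real.exp (-m * ‖x‖) * (-m * 1)) ‖x‖ :=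
    (((hasDerivAt_id ‖x‖).const_mul (-m)).exp)
  have hinv : HasDerivAt (fun t : ℝ => t⁻¹) (-(‖x‖^2)⁻¹) ‖x‖ := hasDerivAt_inv hr.ne'
  have hd1 := hinv.mul hexp
  have hd2 := (hinv.mul hinv).mul hexp
  have Hφ := aux_radial x hx (fun t : ℝ => t⁻¹ * Real.exp (-m * t)) _ hd1 C
  have hfφ := Hφ.fderiv
  have Hχ := HasFDerivAt.fun_sum (u := (Finset.univ : Finset (Fin 3)))
    (fun k _ => aux_coordRadial x hx (fun t : ℝ => t⁻¹ * t⁻¹ * Real.exp (-m * t)) _ hd2 k (Complex.I • (pauli k).mulVec C))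
  have hfχ := Hχ.fderiv
  have hs : ((x 0 : ℝ):ℂ)^2 + ((x 1 : ℝ):ℂ)^2 + ((x 2 : ℝ):ℂ)^2 = ((‖x‖ : ℝ):ℂ)^2 := by
    have hr2 : x 0 ^ 2 + x 1 ^ 2 + x 2 ^ 2 = ‖x‖ ^ 2 := by
      rw [EuclideanSpace.norm_eq, Real.sq_sqrt (by positivity)]
      simp [Fin.sum_univ_three, sq_abs, Real.norm_eq_abs]
    exact_mod_cast congrArg (Complex.ofReal) hr2
  have hu : ((‖x‖ : ℝ):ℂ) * ((‖x‖ : ℝ):ℂ)⁻¹ = 1 :=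
    mul_inv_cancel₀ (by exact_mod_cast hr.ne')
  refine ⟨?_, ?_⟩
  · funext j
    simp only [sigmaGrad]
    rw [hfχ]
    simp only [ContinuousLinearMap.sum_apply, aux_eval2]
    have key : ∀ j : Fin 2,
        Complex.exp (-((m:ℂ) * (‖x‖:ℝ))) * C j *
              (-2*((‖x‖:ℝ):ℂ)⁻¹^4 - (m:ℂ)*((‖x‖:ℝ):ℂ)⁻¹^3) * (((x 0 : ℝ):ℂ)^2 + ((x 1 : ℝ):ℂ)^2 + ((x 2 : ℝ):ℂ)^2 - ((‖x‖ : ℝ):ℂ)^2) +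
            -(Complex.exp (-((m:ℂ) * (‖x‖:ℝ))) * C j) *
              (2*((‖x‖:ℝ):ℂ)⁻¹^2 + (m:ℂ)*((‖x‖:ℝ):ℂ)⁻¹) *
              (((‖x‖:ℝ):ℂ)⁻¹*((‖x‖:ℝ):ℂ)+1) * (((‖x‖ : ℝ):ℂ) * ((‖x‖ : ℝ):ℂ)⁻¹ - 1) = 0 := by
      intro j
      rw [hs, hu]
      ring
    fin_cases j
    · simp [pauli, Matrix.mulVec, dotProduct, Fin.sum_univ_three, Fin.sum_univ_two, Matrix.vecHead, Matrix.vecTail]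
      push_cast
      linear_combination (norm := (ring_nf; simp only [Complex.I_sq, Complex.I_pow_four]; ring1))
        (Complex.exp (-((m:ℂ) * (‖x‖:ℝ))) * C 0) *
            (-2*((‖x‖:ℝ):ℂ)⁻¹^4 - (m:ℂ)*((‖x‖:ℝ):ℂ)⁻¹^3) * hs +
          (-(Complex.exp (-((m:ℂ) * (‖x‖:ℝ))) * C 0) *
            (2*((‖x‖:ℝ):ℂ)⁻¹^2 + (m:ℂ)*((‖x‖:ℝ):ℂ)⁻¹) *
            (((‖x‖:ℝ):ℂ)⁻¹*((‖x‖:ℝ):ℂ)+1)) * hu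
    · simp [pauli, Matrix.mulVec, dotProduct, Fin.sum_univ_three, Fin.sum_univ_two, Matrix.vecHead, Matrix.vecTail]
      push_cast
      linear_combination (norm := (ring_nf; simp only [Complex.I_sq, Complex.I_pow_four]; ring1))
        (Complex.exp (-((m:ℂ) * (‖x‖:ℝ))) * C 1) *
            (-2*((‖x‖:ℝ):ℂ)⁻¹^4 - (m:ℂ)*((‖x‖:ℝ):ℂ)⁻¹^3) * hs +
          (-(Complex.exp (-((m:ℂ) * (‖x‖:ℝ))) * C 1) *
            (2*((‖x‖:ℝ):ℂ)⁻¹^2 + (m:ℂ)*((‖x‖:ℝ):ℂ)⁻¹) *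
            (((‖x‖:ℝ):ℂ)⁻¹*((‖x‖:ℝ):ℂ)+1)) * hu
  · funext j
    simp only [sigmaGrad]
    rw [hfφ]
    simp only [aux_eval1]
    fin_cases j <;>
      · simp [pauli, Matrix.mulVec, dotProduct, Fin.sum_univ_three, Fin.sum_univ_two]
        push_cast
        ring
end
end
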